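/- Let q ∈ ℂ* not be a root of unity and let M = A_q / (A_q·(σ−1)) ≅ O be the structure sheaf, with e the image of 1, and f = (1+z)e. Then the annihilator left ideal I = Ann(f) ⊆ A_q contains p = σ² − (q+1)σ + q and w = (z+1)σ − (qz+1), these satisfy the relation (qz+1)·p = (σ−q)·w in A_q, and I = A_q·p + A_q·w. -/

import Mathlib

open LaurentPolynomial

private lemma aux_smul_eq (q : ℂ) (x : LaurentPolynomial ℂ) : q • x = C q * x := by
  rw [Algebra.smul_def, LaurentPolynomial.algebraMap_apply]; simp

private lemma aux_factor (q : ℂ) (hq1 : q ≠ 1) (α β : LaurentPolynomial ℂ)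
    (h : α * (1 + T 1) + β * (1 + q • T 1) = 0) :
    ∃ c, β = (1 + T 1) * c ∧ α = -(c * (1 + q • T 1)) := by
  have hTne : (1 + T 1 : LaurentPolynomial ℂ) ≠ 0 := by
    intro h
    rw [show (1 + T 1 : LaurentPolynomial ℂ) = Polynomial.toLaurent (1 + Polynomial.X) by
      simp [Polynomial.toLaurent_X]] at h
    have h2 : (1 + Polynomial.X : Polynomial ℂ) = 0 :=
      Polynomial.toLaurent_injective (by simpa using h)
    have := congrArg (fun p => Polynomial.coeff p 0) h2
    simp at this
  have hP : IsCoprime (1 + Polynomial.X : Polynomial ℂ) (1 + Polynomial.C q * Polynomial.X) := by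
    refine ⟨Polynomial.C (q/(q-1)), Polynomial.C (1/(1-q)), ?_⟩
    have h1 : q - 1 ≠ 0 := sub_ne_zero.mpr hq1
    have h2 : (1:ℂ) - q ≠ 0 := sub_ne_zero.mpr (Ne.symm hq1)
    have e1 : q/(q-1) + 1/(1-q) = 1 := by field_simp; ring
    have e2 : q/(q-1) + 1/(1-q)*q = 0 := by field_simp; ring
    have : (Polynomial.C (q/(q-1)) * (1+Polynomial.X)
          + Polynomial.C (1/(1-q)) * (1 + Polynomial.C q * Polynomial.X) : Polynomial ℂ)
        = Polynomial.C (q/(q-1) + 1/(1-q)) + Polynomial.C (q/(q-1) + 1/(1-q)*q) * Polynomial.X := by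
      simp [map_add, map_mul]; ring
    rw [this, e1, e2]; simp
  have hcop : IsCoprime (1 + T 1 : LaurentPolynomial ℂ) (1 + q • T 1) := by
    have := hP.map (Polynomial.toLaurent (R := ℂ))
    simpa [Polynomial.toLaurent_X, Polynomial.toLaurent_C, aux_smul_eq] using this
  have hdvd : (1 + T 1 : LaurentPolynomial ℂ) ∣ β := by
    refine hcop.dvd_of_dvd_mul_right ?_
    exact ⟨-α, by linear_combination h⟩
  obtain ⟨c, hc⟩ := hdvd
  refine ⟨c, hc, ?_⟩
  have h2 : (1 + T 1) * α = (1 + T 1) * (-(c * (1 + q • T 1))) := by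
    rw [hc] at h
    ring_nf
    ring_nf at h
    linear_combination h
  exact mul_left_cancel₀ hTne h2

/-- Let `q ∈ ℂ*` not be a root of unity, let `A_q` be the quantum torus
(a `ℂ`-algebra with invertible `z, σ` satisfying `σz = qzσ` and `ℂ`-basis `z^m σ^n`), and let
`M = A_q/(A_q·(σ−1)) ≅ O` with `e` the image of `1` and `f = (1+z)e`.  Then the annihilator
left ideal `I = Ann(f)` contains `p = σ² − (q+1)σ + q` and `w = (z+1)σ − (qz+1)`, these satisfy
`(qz+1)·p = (σ−q)·w` in `A_q`, and `I = A_q·p + A_q·w`. -/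
theorem stmt_7 (q : ℂ) (hq : ∀ n : ℤ, n ≠ 0 → q ^ n ≠ 1)
    (D : Type*) [Ring D] [Algebra ℂ D] (zd σd : Dˣ)
    (hrel : (σd : D) * (zd : D) = q • ((zd : D) * (σd : D)))
    (B : Module.Basis (ℤ × ℤ) ℂ D)
    (hB : ∀ p : ℤ × ℤ, B p = ((zd ^ p.1 : Dˣ) : D) * ((σd ^ p.2 : Dˣ) : D)) :
    let J : Submodule D D := Submodule.span D {(σd : D) - 1}
    let e : D ⧸ J := Submodule.Quotient.mk 1
    let f : D ⧸ J := ((1 : D) + (zd : D)) • e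
    let p : D := (σd : D) ^ 2 - (q + 1) • (σd : D) + q • (1 : D)
    let w : D := ((zd : D) + 1) * (σd : D) - (q • (zd : D) + 1)
    p • f = 0 ∧ w • f = 0 ∧
      (q • (zd : D) + 1) * p = ((σd : D) - q • (1 : D)) * w ∧
      ∀ x : D, x • f = 0 ↔ x ∈ Submodule.span D ({p, w} : Set D) := by
  intro J e f p w
  have hD : Nontrivial D := nontrivial_of_ne (B (0,0)) 0 (B.ne_zero _)
  have hq0 : q ≠ 0 := by
    intro h
    apply Units.ne_zero (σd * zd)
    rw [Units.val_mul, hrel, h, zero_smul]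
  have hq1 : q ≠ 1 := by simpa using hq 1 one_ne_zero
  -- commutation for integer powers of σ
  have hinv : ((σd⁻¹ : Dˣ) : D) * (zd : D) = q⁻¹ • ((zd : D) * ((σd⁻¹ : Dˣ) : D)) := by
    have h1 : (zd : D) * ((σd⁻¹ : Dˣ) : D) = q • (((σd⁻¹ : Dˣ) : D) * (zd : D)) := by
      have := congrArg (fun t => ((σd⁻¹ : Dˣ) : D) * t * ((σd⁻¹ : Dˣ) : D)) hrel
      simpa [← mul_assoc, Units.inv_mul, Units.mul_inv_cancel_right, mul_smul_comm,
        smul_mul_assoc] using this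
    rw [h1, smul_smul, inv_mul_cancel₀ hq0, one_smul]
  have hzpow : ∀ n : ℤ, ((σd ^ n : Dˣ) : D) * (zd : D)
      = q ^ n • ((zd : D) * ((σd ^ n : Dˣ) : D)) := by
    intro n
    induction n using Int.induction_on with
    | zero => simp
    | succ k ih =>
        rw [zpow_add_one, Units.val_mul, mul_assoc, hrel, mul_smul_comm, ← mul_assoc, ih,
          smul_mul_assoc, smul_smul, mul_assoc, ← Units.val_mul, ← zpow_add_one, mul_comm,
          ← zpow_add_one₀ hq0]
    | pred k ih =>
        rw [zpow_sub_one, Units.val_mul, mul_assoc, hinv, mul_smul_comm, ← mul_assoc, ih,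
          smul_mul_assoc, smul_smul, mul_assoc, ← Units.val_mul, ← zpow_sub_one, mul_comm,
          ← zpow_sub_one₀ hq0]
  -- basis multiplication lemmas
  have hBσ : ∀ m n : ℤ, B (m, n) * (σd : D) = B (m, n+1) := by
    intro m n
    rw [hB, hB, mul_assoc, ← Units.val_mul, ← zpow_add_one]
  have hBZ : ∀ m n : ℤ, B (m, n) * (zd : D) = q ^ n • B (m+1, n) := by
    intro m n
    rw [hB, hB, mul_assoc, hzpow n, mul_smul_comm, ← mul_assoc, ← Units.val_mul, ← zpow_add_one]
  have hBn0 : ∀ m : ℤ, ((zd ^ m : Dˣ) : D) = B (m, 0) := by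
    intro m; rw [hB]; simp
  -- the linear map ψ reading off the "σ-constant term"
  set ψ : D →ₗ[ℂ] LaurentPolynomial ℂ :=
    B.constr ℕ (fun p : ℤ × ℤ => (T p.1 : LaurentPolynomial ℂ)) with hψdef
  have hψB : ∀ m n : ℤ, ψ (B (m, n)) = T m := by
    intro m n; exact B.constr_basis ℕ _ (m, n)
  have hψσ : ∀ x : D, ψ (x * (σd : D)) = ψ x := by
    have : ψ.comp (LinearMap.mulRight ℂ ((σd : D))) = ψ := by
      apply B.ext; rintro ⟨m, n⟩
      simp only [LinearMap.comp_apply, LinearMap.mulRight_apply]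
      rw [hBσ, hψB, hψB]
    intro x
    have := congrArg (fun g => g x) this
    simpa using this
  -- the algebra map Φ : ℂ[T,T⁻¹] → D, T ↦ z
  set M : Multiplicative ℤ →* D :=
    { toFun := fun n => ((zd ^ (Multiplicative.toAdd n) : Dˣ) : D)
      map_one' := by simp
      map_mul' := by intro a b; rw [← Units.val_mul, ← zpow_add]; rfl } with hMdef
  set Φ : LaurentPolynomial ℂ →ₐ[ℂ] D := AddMonoidAlgebra.lift ℂ D ℤ M with hΦdef
  have hΦT : ∀ m : ℤ, Φ (T m) = ((zd ^ m : Dˣ) : D) := by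
    intro m
    show (AddMonoidAlgebra.lift ℂ D ℤ M) (AddMonoidAlgebra.single m (1:ℂ)) = _
    rw [AddMonoidAlgebra.lift_single]
    simp [hMdef]
  have hsingle : ∀ (n : ℤ) (c : ℂ), (AddMonoidAlgebra.single n c : LaurentPolynomial ℂ) = c • T n := by
    intro n c
    rw [single_eq_C_mul_T, ← aux_smul_eq]
  have hψΦ : ∀ a : LaurentPolynomial ℂ, ψ (Φ a) = a := by
    intro a
    induction a using LaurentPolynomial.induction_on' with
    | add x y hx hy => rw [map_add, map_add, hx, hy]
    | C_mul_T n c =>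
        rw [← aux_smul_eq, map_smul, map_smul, hΦT, hBn0, hψB]
  -- membership in J is detected by ψ
  have hσJ : ∀ n : ℤ, ((σd ^ n : Dˣ) : D) - 1 ∈ J := by
    have hbase : ((σd : D) - 1) ∈ J := Submodule.mem_span_singleton_self _
    intro n
    induction n using Int.induction_on with
    | zero => simp
    | succ k ih =>
        have : ((σd ^ ((k:ℤ)+1) : Dˣ) : D) - 1
            = ((σd ^ (k:ℤ) : Dˣ) : D) • ((σd : D) - 1) + (((σd ^ (k:ℤ) : Dˣ) : D) - 1) := by
          rw [smul_eq_mul, mul_sub, mul_one, zpow_add_one, Units.val_mul]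
          abel
        rw [this]
        exact J.add_mem (J.smul_mem _ hbase) ih
    | pred k ih =>
        have : ((σd ^ (-(k:ℤ)-1) : Dˣ) : D) - 1
            = (((σd ^ (-(k:ℤ)) : Dˣ) : D) * (-((σd⁻¹ : Dˣ) : D))) • ((σd : D) - 1)
              + (((σd ^ (-(k:ℤ)) : Dˣ) : D) - 1) := by
          rw [smul_eq_mul, zpow_sub_one, Units.val_mul]
          have h1 : ((σd ^ (-(k:ℤ)) : Dˣ) : D) * -((σd⁻¹ : Dˣ) : D) * ((σd : D) - 1)
              = -(((σd ^ (-(k:ℤ)) : Dˣ) : D) * (((σd⁻¹ : Dˣ) : D) * (σd : D)))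
                + ((σd ^ (-(k:ℤ)) : Dˣ) : D) * ((σd⁻¹ : Dˣ) : D) := by
            simp [mul_sub, mul_assoc]
          rw [h1, ← Units.val_mul, Units.inv_mul, mul_one]
          abel
        rw [this]
        exact J.add_mem (J.smul_mem _ hbase) ih
  have htop : ∀ x : D, x ∈ Submodule.span ℂ (Set.range B) := by
    intro x; rw [B.span_eq]; trivial
  have hJψ : ∀ x : D, x ∈ J ↔ ψ x = 0 := by
    have hsub : ∀ x : D, x - Φ (ψ x) ∈ J := by
      intro x
      induction htop x using Submodule.span_induction with
      | mem y hy =>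
          obtain ⟨⟨m, n⟩, rfl⟩ := hy
          rw [hψB, hΦT, hBn0]
          have : B (m, n) - B (m, 0) = ((zd ^ m : Dˣ) : D) • (((σd ^ n : Dˣ) : D) - 1) := by
            rw [smul_eq_mul, mul_sub, mul_one, hB (m, n), hB (m, 0)]
            simp
          rw [this]
          exact J.smul_mem _ (hσJ n)
      | zero => simp
      | add y z hy hz ihy ihz =>
          have : y + z - Φ (ψ (y + z)) = (y - Φ (ψ y)) + (z - Φ (ψ z)) := by
            rw [map_add, map_add]; abel
          rw [this]; exact J.add_mem ihy ihz
      | smul c y hy ihy =>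
          have : c • y - Φ (ψ (c • y)) = c • (y - Φ (ψ y)) := by
            rw [map_smul, map_smul, smul_sub]
          rw [this]; exact J.smul_of_tower_mem c ihy
    intro x
    constructor
    · intro hx
      obtain ⟨d, hd⟩ := Submodule.mem_span_singleton.mp hx
      rw [← hd, smul_eq_mul, mul_sub, mul_one, map_sub, hψσ, sub_self]
    · intro hx
      have := hsub x
      rwa [hx, map_zero, sub_zero] at this
  -- annihilation is detected by ψ ∘ (right mult by 1+z)
  have hf : f = Submodule.Quotient.mk ((1:D) + (zd : D)) := by
    show ((1:D) + (zd : D)) • (Submodule.Quotient.mk (1:D) : D ⧸ J) = _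
    rw [← Submodule.Quotient.mk_smul, smul_eq_mul, mul_one]
  have hann : ∀ x : D, x • f = 0 ↔ ψ (x * ((1:D) + (zd : D))) = 0 := by
    intro x
    rw [hf, ← Submodule.Quotient.mk_smul, smul_eq_mul, Submodule.Quotient.mk_eq_zero, hJψ]
  have hev : ∀ m n : ℤ, ψ (B (m, n) * ((1:D) + (zd : D))) = T m + q ^ n • T (m+1) := by
    intro m n
    rw [mul_add, mul_one, hBZ, map_add, map_smul, hψB, hψB]
  -- p and w in terms of the basis
  have hpB : p = B (0, 2) - (q+1) • B (0, 1) + q • B (0, 0) := by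
    show (σd : D) ^ 2 - (q + 1) • (σd : D) + q • (1 : D) = _
    rw [hB, hB, hB]
    norm_num
  have hwB : w = B (1, 1) + B (0, 1) - q • B (1, 0) - B (0, 0) := by
    show ((zd : D) + 1) * (σd : D) - (q • (zd : D) + 1) = _
    rw [hB, hB, hB, hB]
    norm_num
    rw [add_mul, one_mul]
    abel
  -- p and w annihilate f
  have hpf : p • f = 0 := by
    rw [hann, hpB, add_mul, sub_mul, smul_mul_assoc, smul_mul_assoc, map_add, map_sub,
      map_smul, map_smul, hev, hev, hev]
    simp only [zpow_zero, zpow_one, show ((2:ℤ))=((2:ℕ):ℤ) from rfl, zpow_natCast,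
      aux_smul_eq, map_add, map_mul, map_one, map_pow]
    ring
  have hwf : w • f = 0 := by
    rw [hann, hwB, sub_mul, sub_mul, add_mul, smul_mul_assoc, map_sub, map_sub, map_add,
      map_smul, hev, hev, hev, hev]
    simp only [zpow_zero, zpow_one, aux_smul_eq, map_add, map_mul, map_one]
    ring
  -- the relation (qz+1) p = (σ - q) w
  have hpw : (q • (zd : D) + 1) * p = ((σd : D) - q • (1 : D)) * w := by
    show (q • (zd : D) + 1) * ((σd : D) ^ 2 - (q + 1) • (σd : D) + q • (1 : D))
        = ((σd : D) - q • (1 : D)) * (((zd : D) + 1) * (σd : D) - (q • (zd : D) + 1))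
    have h2 : (σd : D) * ((zd : D) * (σd : D)) = q • ((zd : D) * ((σd : D) * (σd : D))) := by
      rw [← mul_assoc, hrel, smul_mul_assoc, mul_assoc]
    simp only [mul_add, add_mul, mul_sub, sub_mul, smul_mul_assoc, mul_smul_comm, mul_one,
      one_mul, pow_two, mul_assoc, smul_smul]
    rw [h2, hrel]
    module
  -- span of p, w
  set SP : Submodule D D := Submodule.span D ({p, w} : Set D) with hSPdef
  have hpmem : p ∈ SP := Submodule.subset_span (by simp)
  have hwmem : w ∈ SP := Submodule.subset_span (by simp)
  have hSPann : ∀ s ∈ SP, s • f = 0 := by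
    intro s hs
    induction hs using Submodule.span_induction with
    | mem y hy =>
        rcases hy with h | h
        · rw [h]; exact hpf
        · rw [Set.mem_singleton_iff] at h; rw [h]; exact hwf
    | zero => rw [zero_smul]
    | add y z hy hz ihy ihz => rw [add_smul, ihy, ihz, add_zero]
    | smul d y hy ihy => rw [smul_eq_mul, mul_smul, ihy, smul_zero]
  -- degree reduction
  have hBp : ∀ m n : ℤ, B (m, n) * p = B (m, n+2) - (q+1) • B (m, n+1) + q • B (m, n) := by
    intro m n
    show B (m, n) * ((σd : D) ^ 2 - (q + 1) • (σd : D) + q • (1 : D)) = _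
    rw [mul_add, mul_sub, mul_smul_comm, mul_smul_comm, mul_one, pow_two, ← mul_assoc,
      hBσ, hBσ, show n + 1 + 1 = n + 2 by ring]
  set K : Submodule ℂ D :=
    Submodule.span ℂ (Set.range fun m : ℤ => B (m, 0))
      ⊔ Submodule.span ℂ (Set.range fun m : ℤ => B (m, 1))
      ⊔ SP.restrictScalars ℂ with hKdef
  have hKp : ∀ m n : ℤ, B (m, n) * p ∈ K := by
    intro m n
    apply Submodule.mem_sup_right
    show B (m, n) * p ∈ SP
    rw [← smul_eq_mul]
    exact SP.smul_mem _ hpmem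
  have hKup : ∀ m n : ℤ, B (m, n) ∈ K → B (m, n+1) ∈ K → B (m, n+2) ∈ K := by
    intro m n h1 h2
    have : B (m, n+2) = B (m, n) * p + ((q+1) • B (m, n+1) - q • B (m, n)) := by
      rw [hBp]; module
    rw [this]
    exact K.add_mem (hKp m n) (K.sub_mem (K.smul_mem _ h2) (K.smul_mem _ h1))
  have hKdn : ∀ m n : ℤ, B (m, n+1) ∈ K → B (m, n+2) ∈ K → B (m, n) ∈ K := by
    intro m n h1 h2
    have : B (m, n) = q⁻¹ • (B (m, n) * p - B (m, n+2) + (q+1) • B (m, n+1)) := by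
      rw [hBp]
      match_scalars <;> field_simp <;> ring_nf
    rw [this]
    exact K.smul_mem _ (K.add_mem (K.sub_mem (hKp m n) h2) (K.smul_mem _ h1))
  have hK : ∀ m n : ℤ, B (m, n) ∈ K := by
    intro m n
    have hQ : ∀ n : ℤ, B (m, n) ∈ K ∧ B (m, n+1) ∈ K := by
      intro n
      induction n using Int.induction_on with
      | zero =>
          constructor
          · exact Submodule.mem_sup_left (Submodule.mem_sup_left
              (Submodule.subset_span ⟨m, rfl⟩))
          · exact Submodule.mem_sup_left (Submodule.mem_sup_right
              (Submodule.subset_span ⟨m, rfl⟩))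
      | succ k ih =>
          refine ⟨ih.2, ?_⟩
          have := hKup m k ih.1 ih.2
          convert this using 3 <;> ring
      | pred k ih =>
          refine ⟨?_, by simpa using ih.1⟩
          have := hKdn m (-(k:ℤ)-1) (by simpa [show (-(k:ℤ)-1)+1 = -(k:ℤ) by ring] using ih.1)
            (by simpa [show (-(k:ℤ)-1)+2 = -(k:ℤ)+1 by ring] using ih.2)
          exact this
    exact (hQ n).1
  have hKtop : ∀ x : D, x ∈ K := by
    intro x
    have h1 : Submodule.span ℂ (Set.range B) ≤ K := by
      rw [Submodule.span_le]
      rintro _ ⟨⟨m, n⟩, rfl⟩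
      exact hK m n
    exact h1 (htop x)
  -- representing degree-≤-1 parts via Laurent polynomials
  have hu : ∀ u ∈ Submodule.span ℂ (Set.range fun m : ℤ => B (m, 0)), u = Φ (ψ u) := by
    intro u hu
    induction hu using Submodule.span_induction with
    | mem y hy =>
        obtain ⟨m, rfl⟩ := hy
        rw [hψB, hΦT, hBn0]
    | zero => simp
    | add y z hy hz ihy ihz => rw [map_add, map_add, ← ihy, ← ihz]
    | smul c y hy ihy => rw [map_smul, map_smul, ← ihy]
  have hv : ∀ v ∈ Submodule.span ℂ (Set.range fun m : ℤ => B (m, 1)),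
      v = Φ (ψ v) * (σd : D) := by
    intro v hv
    induction hv using Submodule.span_induction with
    | mem y hy =>
        obtain ⟨m, rfl⟩ := hy
        rw [hψB, hΦT, hBn0, hBσ]
        norm_num
    | zero => simp
    | add y z hy hz ihy ihz => rw [map_add, map_add, add_mul, ← ihy, ← ihz]
    | smul c y hy ihy => rw [map_smul, map_smul, smul_mul_assoc, ← ihy]
  -- evaluation of Φ-images under ev
  have hevΦ : ∀ a : LaurentPolynomial ℂ,
      ψ (Φ a * ((1:D) + (zd : D))) = a * (1 + T 1) := by
    intro a
    induction a using LaurentPolynomial.induction_on' with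
    | add x y hx hy =>
        rw [map_add, add_mul, map_add, hx, hy]; ring
    | C_mul_T n c =>
        rw [← aux_smul_eq, map_smul, hΦT, hBn0, smul_mul_assoc, map_smul, hev,
          smul_mul_assoc, mul_add, mul_one, ← T_add]
        simp
  have hevΦσ : ∀ a : LaurentPolynomial ℂ,
      ψ (Φ a * (σd : D) * ((1:D) + (zd : D))) = a * (1 + q • T 1) := by
    intro a
    induction a using LaurentPolynomial.induction_on' with
    | add x y hx hy =>
        rw [map_add, add_mul, add_mul, map_add, hx, hy]; ring
    | C_mul_T n c =>
        rw [← aux_smul_eq, map_smul, hΦT, hBn0, smul_mul_assoc, hBσ, smul_mul_assoc,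
          map_smul, hev, smul_mul_assoc, mul_add, mul_one, mul_smul_comm, ← T_add]
        simp [zpow_one]
  -- assembling everything
  refine ⟨hpf, hwf, hpw, fun x => ⟨?_, fun hx => hSPann x hx⟩⟩
  intro hxf
  rcases Submodule.mem_sup.mp (hKtop x) with ⟨y, hy, s, hs, hx⟩
  rcases Submodule.mem_sup.mp hy with ⟨u, hu', v, hv', hy'⟩
  have hsSP : s ∈ SP := hs
  have hsf : s • f = 0 := hSPann s hsSP
  have huvf : (u + v) • f = 0 := by
    have hxuv : x = (u + v) + s := by rw [← hx, ← hy']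
    have := hxf
    rw [hxuv, add_smul, hsf, add_zero] at this
    exact this
  have h0 : ψ u * 0 = 0 := by ring
  have hev0 : (ψ u) * (1 + T 1) + (ψ v) * (1 + q • T 1) = 0 := by
    have h1 := (hann (u+v)).mp huvf
    rw [add_mul, map_add] at h1
    rw [← hevΦ (ψ u), ← hevΦσ (ψ v), ← hu u hu', ← hv v hv']
    exact h1
  obtain ⟨c, hc1, hc2⟩ := aux_factor q hq1 (ψ u) (ψ v) hev0
  have huvw : u + v = Φ c • w := by
    have hu2 : u = Φ (ψ u) := hu u hu'
    have hv2 : v = Φ (ψ v) * (σd : D) := hv v hv'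
    rw [hu2, hv2, hc1, hc2]
    show Φ (-(c * (1 + q • T 1))) + Φ ((1 + T 1) * c) * (σd : D)
        = Φ c • (((zd : D) + 1) * (σd : D) - (q • (zd : D) + 1))
    rw [mul_comm (1 + T 1 : LaurentPolynomial ℂ) c]
    rw [map_neg, map_mul, map_mul, map_add, map_add, map_one, map_smul, hΦT]
    rw [show ((zd ^ (1:ℤ) : Dˣ) : D) = (zd : D) by norm_num]
    rw [smul_eq_mul]
    simp only [mul_add, add_mul, mul_sub, sub_mul, mul_one, one_mul, mul_assoc, mul_smul_comm,
      smul_mul_assoc]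
    abel
  have : u + v ∈ SP := by rw [huvw]; exact SP.smul_mem _ hwmem
  have hxuv : x = (u + v) + s := by rw [← hx, ← hy']
  rw [hxuv]
  exact SP.add_mem this hsSP
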